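/- Let k be a field of characteristic 2, a,b,c,d ∈ k, and let F(x,y,z,w) be the determinant of the 4×4 matrix with rows (a·y·z·w, x, 1, a), (b·x·z·w, y, 1, b), (c·x·y·w, z, 1, c), (d·x·y·z, w, 1, d). Then for all s,t ∈ k, F(s+ta, s+tb, s+tc, s+td) = 0; i.e., F vanishes identically on the line through (1,1,1,1) and (a,b,c,d), and moreover under the substitution x ↦ a/x, y ↦ b/y, z ↦ c/z, w ↦ d/w (for x,y,z,w ≠ 0) the image of any point of this line with nonzero coordinates again satisfies F = 0. -/

import Mathlib

/-- The Hutchinson determinantal equation of the Weddle quartic surface. -/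
def weddle {R : Type*} [CommRing R] (a b c d x y z w : R) : R :=
  Matrix.det !![a*y*z*w, x, 1, a;
                b*x*z*w, y, 1, b;
                c*x*y*w, z, 1, c;
                d*x*y*z, w, 1, d]

lemma weddle_eq {R : Type*} [CommRing R] (a b c d x y z w : R) :
    weddle a b c d x y z w =
      - c*d*x*y^2*w + c*d*x*y^2*z + c*d*x^2*y*w - c*d*x^2*y*z + b*d*x*z^2*w
      - b*d*x*y*z^2 - b*d*x^2*z*w + b*d*x^2*y*z - b*c*x*z*w^2 + b*c*x*y*w^2
      + b*c*x^2*z*w - b*c*x^2*y*w - a*d*y*z^2*w + a*d*y^2*z*w + a*d*x*y*z^2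
      - a*d*x*y^2*z + a*c*y*z*w^2 - a*c*y^2*z*w - a*c*x*y*w^2 + a*c*x*y^2*w
      - a*b*y*z*w^2 + a*b*y*z^2*w + a*b*x*z*w^2 - a*b*x*z^2*w := by
  simp [weddle, Matrix.det_succ_row_zero, Fin.sum_univ_succ, Fin.succAbove, Fin.castSucc,
    Fin.castAdd, Fin.castLE, Matrix.cons_val_succ]
  ring

set_option maxHeartbeats 1000000 in
lemma weddle_cremona {k : Type*} [Field k] (a b c d x y z w : k)
    (hx : x ≠ 0) (hy : y ≠ 0) (hz : z ≠ 0) (hw : w ≠ 0) :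
    weddle a b c d (a / x) (b / y) (c / z) (d / w) =
      -(a * b * c * d) * (x⁻¹^2 * y⁻¹^2 * z⁻¹^2 * w⁻¹^2) * weddle a b c d x y z w := by
  have hx' : x * x⁻¹ = 1 := mul_inv_cancel₀ hx
  have hy' : y * y⁻¹ = 1 := mul_inv_cancel₀ hy
  have hz' : z * z⁻¹ = 1 := mul_inv_cancel₀ hz
  have hw' : w * w⁻¹ = 1 := mul_inv_cancel₀ hw
  rw [weddle_eq, weddle_eq]
  linear_combination (a*b*c^2*d^2*y*w*y⁻¹^2*z⁻¹^2*w⁻¹^2 - a*b*c^2*d^2*y*z*y⁻¹^2*z⁻¹^2*w⁻¹^2 -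
    a*b*c^2*d^2*y^2*w*x⁻¹*y⁻¹^2*z⁻¹^2*w⁻¹^2 + a*b*c^2*d^2*y^2*z*x⁻¹*y⁻¹^2*z⁻¹^2*w⁻¹^2 +
    a*b*c^2*d^2*x*y*w*x⁻¹*y⁻¹^2*z⁻¹^2*w⁻¹^2 - a*b*c^2*d^2*x*y*z*x⁻¹*y⁻¹^2*z⁻¹^2*w⁻¹^2 -
    a*b^2*c*d^2*z*w*y⁻¹^2*z⁻¹^2*w⁻¹^2 + a*b^2*c*d^2*z^2*w*x⁻¹*y⁻¹^2*z⁻¹^2*w⁻¹^2 +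
    a*b^2*c*d^2*y*z*y⁻¹^2*z⁻¹^2*w⁻¹^2 - a*b^2*c*d^2*y*z^2*x⁻¹*y⁻¹^2*z⁻¹^2*w⁻¹^2 -
    a*b^2*c*d^2*x*z*w*x⁻¹*y⁻¹^2*z⁻¹^2*w⁻¹^2 + a*b^2*c*d^2*x*y*z*x⁻¹*y⁻¹^2*z⁻¹^2*w⁻¹^2 +
    a*b^2*c^2*d*z*w*y⁻¹^2*z⁻¹^2*w⁻¹^2 - a*b^2*c^2*d*z*w^2*x⁻¹*y⁻¹^2*z⁻¹^2*w⁻¹^2 -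
    a*b^2*c^2*d*y*w*y⁻¹^2*z⁻¹^2*w⁻¹^2 + a*b^2*c^2*d*y*w^2*x⁻¹*y⁻¹^2*z⁻¹^2*w⁻¹^2 +
    a*b^2*c^2*d*x*z*w*x⁻¹*y⁻¹^2*z⁻¹^2*w⁻¹^2 - a*b^2*c^2*d*x*y*w*x⁻¹*y⁻¹^2*z⁻¹^2*w⁻¹^2 +
    a^2*b*c*d^2*y*z^2*x⁻¹*y⁻¹^2*z⁻¹^2*w⁻¹^2 - a^2*b*c*d^2*y^2*z*x⁻¹*y⁻¹^2*z⁻¹^2*w⁻¹^2 -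
    a^2*b*c^2*d*y*w^2*x⁻¹*y⁻¹^2*z⁻¹^2*w⁻¹^2 + a^2*b*c^2*d*y^2*w*x⁻¹*y⁻¹^2*z⁻¹^2*w⁻¹^2 +
    a^2*b^2*c*d*z*w^2*x⁻¹*y⁻¹^2*z⁻¹^2*w⁻¹^2 - a^2*b^2*c*d*z^2*w*x⁻¹*y⁻¹^2*z⁻¹^2*w⁻¹^2) * hx' +
    (a*b*c^2*d^2*w*y⁻¹*z⁻¹^2*w⁻¹^2 - a*b*c^2*d^2*w*x⁻¹*z⁻¹^2*w⁻¹^2 - a*b*c^2*d^2*z*y⁻¹*z⁻¹^2*w⁻¹^2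
    + a*b*c^2*d^2*z*x⁻¹*z⁻¹^2*w⁻¹^2 - a*b*c^2*d^2*y*w*x⁻¹*y⁻¹*z⁻¹^2*w⁻¹^2 +
    a*b*c^2*d^2*y*z*x⁻¹*y⁻¹*z⁻¹^2*w⁻¹^2 + a*b^2*c*d^2*z*y⁻¹*z⁻¹^2*w⁻¹^2 -
    a*b^2*c*d^2*z^2*x⁻¹*y⁻¹*z⁻¹^2*w⁻¹^2 - a*b^2*c^2*d*w*y⁻¹*z⁻¹^2*w⁻¹^2 +
    a*b^2*c^2*d*w^2*x⁻¹*y⁻¹*z⁻¹^2*w⁻¹^2 - a^2*b*c*d^2*z*x⁻¹*z⁻¹^2*w⁻¹^2 +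
    a^2*b*c*d^2*z*w*x⁻¹^2*z⁻¹^2*w⁻¹^2 + a^2*b*c*d^2*z^2*x⁻¹*y⁻¹*z⁻¹^2*w⁻¹^2 -
    a^2*b*c*d^2*z^2*w*x⁻¹^2*y⁻¹*z⁻¹^2*w⁻¹^2 - a^2*b*c*d^2*y*z*x⁻¹*y⁻¹*z⁻¹^2*w⁻¹^2 +
    a^2*b*c*d^2*y*z*w*x⁻¹^2*y⁻¹*z⁻¹^2*w⁻¹^2 + a^2*b*c^2*d*w*x⁻¹*z⁻¹^2*w⁻¹^2 -
    a^2*b*c^2*d*w^2*x⁻¹*y⁻¹*z⁻¹^2*w⁻¹^2 - a^2*b*c^2*d*z*w*x⁻¹^2*z⁻¹^2*w⁻¹^2 +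
    a^2*b*c^2*d*z*w^2*x⁻¹^2*y⁻¹*z⁻¹^2*w⁻¹^2 + a^2*b*c^2*d*y*w*x⁻¹*y⁻¹*z⁻¹^2*w⁻¹^2 -
    a^2*b*c^2*d*y*z*w*x⁻¹^2*y⁻¹*z⁻¹^2*w⁻¹^2 - a^2*b^2*c*d*z*w^2*x⁻¹^2*y⁻¹*z⁻¹^2*w⁻¹^2 +
    a^2*b^2*c*d*z^2*w*x⁻¹^2*y⁻¹*z⁻¹^2*w⁻¹^2) * hy' + (- a*b*c^2*d^2*y⁻¹*z⁻¹*w⁻¹^2 +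
    a*b*c^2*d^2*x⁻¹*z⁻¹*w⁻¹^2 + a*b^2*c*d^2*y⁻¹*z⁻¹*w⁻¹^2 - a*b^2*c*d^2*x⁻¹*y⁻¹*w⁻¹^2 -
    a*b^2*c*d^2*w*y⁻¹^2*z⁻¹*w⁻¹^2 + a*b^2*c*d^2*w*x⁻¹*y⁻¹^2*w⁻¹^2 - a*b^2*c*d^2*z*x⁻¹*y⁻¹*z⁻¹*w⁻¹^2
    + a*b^2*c*d^2*z*w*x⁻¹*y⁻¹^2*z⁻¹*w⁻¹^2 + a*b^2*c^2*d*w*y⁻¹^2*z⁻¹*w⁻¹^2 -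
    a*b^2*c^2*d*w^2*x⁻¹*y⁻¹^2*z⁻¹*w⁻¹^2 - a^2*b*c*d^2*x⁻¹*z⁻¹*w⁻¹^2 + a^2*b*c*d^2*x⁻¹*y⁻¹*w⁻¹^2 +
    a^2*b*c*d^2*w*x⁻¹^2*z⁻¹*w⁻¹^2 - a^2*b*c*d^2*w*x⁻¹^2*y⁻¹*w⁻¹^2 + a^2*b*c*d^2*z*x⁻¹*y⁻¹*z⁻¹*w⁻¹^2
    - a^2*b*c*d^2*z*w*x⁻¹^2*y⁻¹*z⁻¹*w⁻¹^2 - a^2*b*c^2*d*w*x⁻¹^2*z⁻¹*w⁻¹^2 +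
    a^2*b*c^2*d*w^2*x⁻¹^2*y⁻¹*z⁻¹*w⁻¹^2 - a^2*b^2*c*d*w*x⁻¹*y⁻¹^2*w⁻¹^2 +
    a^2*b^2*c*d*w*x⁻¹^2*y⁻¹*w⁻¹^2 + a^2*b^2*c*d*w^2*x⁻¹*y⁻¹^2*z⁻¹*w⁻¹^2 -
    a^2*b^2*c*d*w^2*x⁻¹^2*y⁻¹*z⁻¹*w⁻¹^2 - a^2*b^2*c*d*z*w*x⁻¹*y⁻¹^2*z⁻¹*w⁻¹^2 +
    a^2*b^2*c*d*z*w*x⁻¹^2*y⁻¹*z⁻¹*w⁻¹^2) * hz' + (a*b*c^2*d^2*y⁻¹*z⁻¹^2*w⁻¹ -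
    a*b*c^2*d^2*x⁻¹*z⁻¹^2*w⁻¹ - a*b^2*c*d^2*y⁻¹^2*z⁻¹*w⁻¹ + a*b^2*c*d^2*x⁻¹*y⁻¹^2*w⁻¹ -
    a*b^2*c^2*d*y⁻¹*z⁻¹^2*w⁻¹ + a*b^2*c^2*d*y⁻¹^2*z⁻¹*w⁻¹ + a*b^2*c^2*d*x⁻¹*y⁻¹*z⁻¹^2 -
    a*b^2*c^2*d*x⁻¹*y⁻¹^2*z⁻¹ + a*b^2*c^2*d*w*x⁻¹*y⁻¹*z⁻¹^2*w⁻¹ - a*b^2*c^2*d*w*x⁻¹*y⁻¹^2*z⁻¹*w⁻¹ +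
    a^2*b*c*d^2*x⁻¹^2*z⁻¹*w⁻¹ - a^2*b*c*d^2*x⁻¹^2*y⁻¹*w⁻¹ + a^2*b*c^2*d*x⁻¹*z⁻¹^2*w⁻¹ -
    a^2*b*c^2*d*x⁻¹*y⁻¹*z⁻¹^2 - a^2*b*c^2*d*x⁻¹^2*z⁻¹*w⁻¹ + a^2*b*c^2*d*x⁻¹^2*y⁻¹*z⁻¹ -
    a^2*b*c^2*d*w*x⁻¹*y⁻¹*z⁻¹^2*w⁻¹ + a^2*b*c^2*d*w*x⁻¹^2*y⁻¹*z⁻¹*w⁻¹ - a^2*b^2*c*d*x⁻¹*y⁻¹^2*w⁻¹ +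
    a^2*b^2*c*d*x⁻¹*y⁻¹^2*z⁻¹ + a^2*b^2*c*d*x⁻¹^2*y⁻¹*w⁻¹ - a^2*b^2*c*d*x⁻¹^2*y⁻¹*z⁻¹ +
    a^2*b^2*c*d*w*x⁻¹*y⁻¹^2*z⁻¹*w⁻¹ - a^2*b^2*c*d*w*x⁻¹^2*y⁻¹*z⁻¹*w⁻¹) * hw'

theorem weddle_line56_and_its_cremona_image {k : Type*} [Field k] [CharP k 2]
    (a b c d : k) :
    (∀ s t : k, weddle a b c d (s + t*a) (s + t*b) (s + t*c) (s + t*d) = 0) ∧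
    (∀ s t : k, s + t*a ≠ 0 → s + t*b ≠ 0 → s + t*c ≠ 0 → s + t*d ≠ 0 →
      weddle a b c d (a / (s + t*a)) (b / (s + t*b)) (c / (s + t*c)) (d / (s + t*d)) = 0) := by
  have h1 : ∀ s t : k, weddle a b c d (s + t*a) (s + t*b) (s + t*c) (s + t*d) = 0 := by
    intro s t
    rw [weddle_eq]; ring
  refine ⟨h1, fun s t hx hy hz hw => ?_⟩
  rw [weddle_cremona a b c d _ _ _ _ hx hy hz hw, h1, mul_zero]
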